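/- Let γ₀ > 0 > γ₁, λ₀, λ₁ > 0, α₀ = λ₀/γ₀ > 0 > α₁ = λ₁/γ₁ with α₀ + α₁ < 0, and ρ₀ < ρ₁. Then the integral ∫_{-∞}^{ρ₀} [γ₀⁻¹(ρ₀-x)^{α₀-1}(ρ₁-x)^{α₁} - γ₁⁻¹(ρ₀-x)^{α₀}(ρ₁-x)^{α₁-1}] dx converges and equals (ρ₁-ρ₀)^{α₀+α₁}[γ₀⁻¹B(-α₀-α₁, α₀) - γ₁⁻¹B(-α₀-α₁, 1+α₀)], where B is the beta function. -/

import Mathlib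

open MeasureTheory

/-- Euler's beta function `B(p,q) = ∫₀¹ t^{p-1}(1-t)^{q-1} dt`. -/
noncomputable def eulerBeta (p q : ℝ) : ℝ :=
  ∫ t in (0:ℝ)..1, t ^ (p - 1) * (1 - t) ^ (q - 1)

/-- The beta integrand is integrable on `(0,1)` when both parameters are positive. -/
lemma betaIntegrableOn (u v : ℝ) (hu : 0 < u) (hv : 0 < v) :
    IntegrableOn (fun t : ℝ => t ^ (u - 1) * (1 - t) ^ (v - 1)) (Set.Ioo 0 1) := by
  have h : IntervalIntegrable
      (fun x : ℝ => (x : ℂ) ^ ((u : ℂ) - 1) * (1 - (x : ℂ)) ^ ((v : ℂ) - 1))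
      MeasureTheory.volume 0 1 :=
    Complex.betaIntegral_convergent (by simpa using hu) (by simpa using hv)
  have h2 : IntegrableOn (fun x : ℝ => (x : ℂ) ^ ((u : ℂ) - 1) * (1 - (x : ℂ)) ^ ((v : ℂ) - 1))
      (Set.Ioo 0 1) :=
    ((intervalIntegrable_iff_integrableOn_Ioc_of_le zero_le_one).mp h).mono_set
      Set.Ioo_subset_Ioc_self
  have h3 : IntegrableOn (fun x : ℝ => ((x ^ (u - 1) * (1 - x) ^ (v - 1) : ℝ) : ℂ))
      (Set.Ioo 0 1) := by
    refine h2.congr_fun (fun x hx => ?_) measurableSet_Ioo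
    rw [Complex.ofReal_mul, Complex.ofReal_cpow hx.1.le,
      Complex.ofReal_cpow (by linarith [hx.2] : (0:ℝ) ≤ 1 - x)]
    push_cast
    ring
  simpa [IntegrableOn] using h3.re

/-- The value of the beta function as a set integral over `Ioo 0 1`. -/
lemma eulerBeta_eq_setIntegral (p q : ℝ) :
    eulerBeta p q = ∫ t in Set.Ioo (0:ℝ) 1, t ^ (p - 1) * (1 - t) ^ (q - 1) := by
  rw [eulerBeta, intervalIntegral.integral_of_le zero_le_one,
    MeasureTheory.integral_Ioc_eq_integral_Ioo]

theorem kac_ou_attraction_repulsion_normalizing (γ0 γ1 l0 l1 ρ0 ρ1 : ℝ)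
    (hγ0 : 0 < γ0) (hγ1 : γ1 < 0) (hl0 : 0 < l0) (hl1 : 0 < l1) (hρ : ρ0 < ρ1)
    (α0 α1 : ℝ) (hα0 : α0 = l0 / γ0) (hα1 : α1 = l1 / γ1) (hsum : α0 + α1 < 0) :
    IntegrableOn
      (fun x => γ0⁻¹ * (ρ0 - x) ^ (α0 - 1) * (ρ1 - x) ^ α1 -
                γ1⁻¹ * (ρ0 - x) ^ α0 * (ρ1 - x) ^ (α1 - 1))
      (Set.Iio ρ0) ∧
    (∫ x in Set.Iio ρ0,
        (γ0⁻¹ * (ρ0 - x) ^ (α0 - 1) * (ρ1 - x) ^ α1 -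
         γ1⁻¹ * (ρ0 - x) ^ α0 * (ρ1 - x) ^ (α1 - 1))) =
      (ρ1 - ρ0) ^ (α0 + α1) *
        (γ0⁻¹ * eulerBeta (-α0 - α1) α0 - γ1⁻¹ * eulerBeta (-α0 - α1) (1 + α0)) := by
  have hα0pos : 0 < α0 := by rw [hα0]; positivity
  have hppos : 0 < -α0 - α1 := by linarith
  set d := ρ1 - ρ0 with hdd
  have hd : 0 < d := sub_pos.mpr hρ
  set g : ℝ → ℝ := fun t => ρ1 - d / t with hg
  set f : ℝ → ℝ := fun x => γ0⁻¹ * (ρ0 - x) ^ (α0 - 1) * (ρ1 - x) ^ α1 -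
      γ1⁻¹ * (ρ0 - x) ^ α0 * (ρ1 - x) ^ (α1 - 1) with hf
  set F : ℝ → ℝ := fun t => d ^ (α0 + α1) *
      (γ0⁻¹ * (t ^ (-α0 - α1 - 1) * (1 - t) ^ (α0 - 1)) -
       γ1⁻¹ * (t ^ (-α0 - α1 - 1) * (1 - t) ^ (1 + α0 - 1))) with hF
  -- the change of variables data
  have hderiv : ∀ t ∈ Set.Ioo (0:ℝ) 1, HasDerivWithinAt g (d / t ^ 2) (Set.Ioo (0:ℝ) 1) t := by
    intro t ht
    have h2 := (hasDerivAt_const t ρ1).sub ((hasDerivAt_inv (ne_of_gt ht.1)).const_mul d)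
    have he : d / t ^ 2 = 0 - d * -(t ^ 2)⁻¹ := by ring
    rw [he, hg]
    simp only [div_eq_mul_inv]
    exact h2.hasDerivWithinAt
  have hinj : Set.InjOn g (Set.Ioo 0 1) := by
    have hm : StrictMonoOn g (Set.Ioo 0 1) := by
      intro a ha b hb hab
      have : d / b < d / a := div_lt_div_of_pos_left hd ha.1 hab
      simp only [hg]
      linarith
    exact hm.injOn
  have himg : g '' Set.Ioo 0 1 = Set.Iio ρ0 := by
    ext y
    simp only [Set.mem_image, Set.mem_Iio, Set.mem_Ioo, hg]
    constructor
    · rintro ⟨t, ⟨ht0, ht1⟩, rfl⟩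
      have h1 : d < d / t := by
        rw [lt_div_iff₀ ht0]; nlinarith
      simp only [hdd] at h1 ⊢
      linarith
    · intro hy
      have hy1 : 0 < ρ1 - y := by linarith
      refine ⟨d / (ρ1 - y), ⟨div_pos hd hy1, ?_⟩, ?_⟩
      · rw [div_lt_one hy1]; simp only [hdd]; linarith
      · field_simp; ring
  -- pointwise identity
  have hpt : ∀ t ∈ Set.Ioo (0:ℝ) 1, |d / t ^ 2| • f (g t) = F t := by
    intro t ht
    have ht0 := ht.1
    have h1t : 0 < 1 - t := by linarith [ht.2]
    have hgt : ρ0 - g t = d * (1 - t) / t := by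
      simp only [hg]
      field_simp [hdd]
      ring
    have hgt' : ρ1 - g t = d / t := by simp [hg]
    rw [smul_eq_mul, abs_of_pos (by positivity : (0:ℝ) < d / t ^ 2)]
    simp only [hf, hF, hgt, hgt']
    simp only [Real.div_rpow (mul_nonneg hd.le h1t.le) ht0.le,
      Real.div_rpow hd.le ht0.le, Real.mul_rpow hd.le h1t.le]
    simp only [Real.rpow_sub hd, Real.rpow_sub ht0, Real.rpow_sub h1t,
      Real.rpow_add hd, Real.rpow_add ht0, Real.rpow_add h1t,
      Real.rpow_neg ht0.le, Real.rpow_one]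
    have e1 : t ^ α0 ≠ 0 := by positivity
    have e2 : t ^ α1 ≠ 0 := by positivity
    have e3 : (1 - t) ^ α0 ≠ 0 := by positivity
    have e4 : d ^ α0 ≠ 0 := by positivity
    have e5 : d ^ α1 ≠ 0 := by positivity
    have e6 : γ0 ≠ 0 := ne_of_gt hγ0
    have e7 : γ1 ≠ 0 := ne_of_lt hγ1
    field_simp
  -- integrability of F
  have hF1 := betaIntegrableOn (-α0 - α1) α0 hppos hα0pos
  have hF2 := betaIntegrableOn (-α0 - α1) (1 + α0) hppos (by linarith)
  have hFint : IntegrableOn F (Set.Ioo 0 1) := by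
    rw [hF]
    exact ((hF1.const_mul γ0⁻¹).sub (hF2.const_mul γ1⁻¹)).const_mul _
  -- transfer along the change of variables
  have keyInt := integrableOn_image_iff_integrableOn_abs_deriv_smul
    measurableSet_Ioo hderiv hinj f
  have key := integral_image_eq_integral_abs_deriv_smul
    measurableSet_Ioo hderiv hinj f
  rw [himg] at key keyInt
  have hint : IntegrableOn f (Set.Iio ρ0) := by
    rw [keyInt]
    exact hFint.congr_fun (fun t ht => (hpt t ht).symm) measurableSet_Ioo
  refine ⟨hint, ?_⟩
  rw [key, MeasureTheory.setIntegral_congr_fun measurableSet_Ioo hpt, hF]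
  rw [MeasureTheory.integral_const_mul,
    MeasureTheory.integral_sub (hF1.const_mul γ0⁻¹) (hF2.const_mul γ1⁻¹),
    MeasureTheory.integral_const_mul, MeasureTheory.integral_const_mul,
    eulerBeta_eq_setIntegral, eulerBeta_eq_setIntegral]
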